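/- Let φ : ℝⁿ → ℝ be continuously differentiable with compact support, and for J ∈ ℤ set φ_J(u) = 2^{−nJ} φ(2^{−J}u). Let x ∈ L²(ℝⁿ), c ∈ ℝⁿ, and let (T_c x)(u) = x(u − c) denote translation. Then ‖(T_c x) ⋆ φ_J − x ⋆ φ_J‖_{L²} ≤ 2^{−J} ‖c‖ · ‖∇φ‖_{L¹} · ‖x‖_{L²}, where ⋆ is convolution on ℝⁿ and ‖∇φ‖_{L¹} = ∫ |∇φ(u)| du. Hence the averaging Φ_J x = x ⋆ φ_J becomes invariant to translations of size small compared to 2^J. -/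

import Mathlib

open MeasureTheory
open scoped ENNReal NNReal

section Aux
variable {n : ℕ}
local notation "E" => EuclideanSpace ℝ (Fin n)


lemma lint_refl (H : E → ℝ≥0∞) (hH : Measurable H) (u : E) :
    ∫⁻ v, H (u - v) = ∫⁻ v, H v := by
  calc ∫⁻ v, H (u - v) = ∫⁻ v, H (-(v - u)) := by simp [neg_sub]
    _ = ∫⁻ v, H (-v) := lintegral_sub_right_eq_self (fun v => H (-v)) u
    _ = ∫⁻ v, H v := by
        exact (Measure.measurePreserving_neg (volume : Measure E)).lintegral_comp hH

lemma young_conv (x : E → ℝ) (hx : StronglyMeasurable x)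
    (h : E → ℝ) (hh : Continuous h) :
    eLpNorm (fun u => ∫ v, x v * h (u - v)) 2 volume ≤
      (∫⁻ w, (‖h w‖₊ : ℝ≥0∞)) * eLpNorm x 2 volume := by
  set X : E → ℝ≥0∞ := fun v => (‖x v‖₊ : ℝ≥0∞) with hX
  set H : E → ℝ≥0∞ := fun w => (‖h w‖₊ : ℝ≥0∞) with hHdef
  have hXm : Measurable X := hx.measurable.nnnorm.coe_nnreal_ennreal
  have hHm : Measurable H := hh.measurable.nnnorm.coe_nnreal_ennreal
  set I : ℝ≥0∞ := ∫⁻ w, H w with hI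
  -- pointwise bound
  have step1 : ∀ u, (‖∫ v, x v * h (u - v)‖₊ : ℝ≥0∞) ≤ ∫⁻ v, X v * H (u - v) := by
    intro u
    refine (enorm_integral_le_lintegral_enorm _).trans_eq ?_
    refine lintegral_congr fun v => ?_
    simp [hX, hHdef, nnnorm_mul, ENNReal.coe_mul]
    rfl
  have hHsub : ∀ u : E, Measurable fun v => H (u - v) := by
    intro u
    exact hHm.comp (measurable_const.sub measurable_id)
  have CS : ∀ u, ∫⁻ v, X v * H (u - v) ≤
      (∫⁻ v, X v ^ (2:ℝ) * H (u - v)) ^ (1/2 : ℝ) * I ^ (1/2 : ℝ) := by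
    intro u
    have conj : Real.HolderConjugate 2 2 := Real.HolderConjugate.two_two
    have hfm : AEMeasurable (fun v => X v * H (u - v) ^ (1/2 : ℝ)) volume :=
      (hXm.mul ((hHsub u).pow_const _)).aemeasurable
    have hgm : AEMeasurable (fun v => H (u - v) ^ (1/2 : ℝ)) volume :=
      ((hHsub u).pow_const _).aemeasurable
    have key := ENNReal.lintegral_mul_le_Lp_mul_Lq volume conj hfm hgm
    have e1 : ∀ v, X v * H (u - v) =
        (X v * H (u - v) ^ (1/2 : ℝ)) * H (u - v) ^ (1/2 : ℝ) := by
      intro v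
      rw [mul_assoc, ← ENNReal.rpow_add_of_nonneg _ _ (by norm_num) (by norm_num)]
      norm_num
    have e2 : ∀ v, (X v * H (u - v) ^ (1/2 : ℝ)) ^ (2:ℝ) = X v ^ (2:ℝ) * H (u - v) := by
      intro v
      rw [ENNReal.mul_rpow_of_nonneg _ _ (by norm_num : (0:ℝ) ≤ 2),
        ← ENNReal.rpow_mul]
      norm_num
    have e3 : ∀ v, (H (u - v) ^ (1/2 : ℝ)) ^ (2:ℝ) = H (u - v) := by
      intro v
      rw [← ENNReal.rpow_mul]
      norm_num
    calc ∫⁻ v, X v * H (u - v)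
        = ∫⁻ v, (fun v => X v * H (u - v) ^ (1/2 : ℝ)) v *
            (fun v => H (u - v) ^ (1/2 : ℝ)) v := lintegral_congr fun v => e1 v
      _ ≤ (∫⁻ v, (X v * H (u - v) ^ (1/2 : ℝ)) ^ (2:ℝ)) ^ (1/2 : ℝ) *
            (∫⁻ v, (H (u - v) ^ (1/2 : ℝ)) ^ (2:ℝ)) ^ (1/2 : ℝ) := key
      _ = (∫⁻ v, X v ^ (2:ℝ) * H (u - v)) ^ (1/2 : ℝ) * I ^ (1/2 : ℝ) := by
          rw [lintegral_congr e2, lintegral_congr e3, lint_refl H hHm u]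
  -- main chain
  set A : E → ℝ≥0∞ := fun u => ∫⁻ v, X v ^ (2:ℝ) * H (u - v) with hA
  have hFm : Measurable (Function.uncurry fun u v => X v ^ (2:ℝ) * H (u - v)) := by
    apply Measurable.mul
    · exact ((hXm.comp measurable_snd).pow_const _)
    · exact hHm.comp (measurable_fst.sub measurable_snd)
  have hAm : Measurable A := by
    exact Measurable.lintegral_prod_right hFm
  have hAswap : ∫⁻ u, A u = (∫⁻ v, X v ^ (2:ℝ)) * I := by
    calc ∫⁻ u, A u = ∫⁻ v, ∫⁻ u, X v ^ (2:ℝ) * H (u - v) :=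
          lintegral_lintegral_swap hFm.aemeasurable
      _ = ∫⁻ v, X v ^ (2:ℝ) * ∫⁻ u, H (u - v) := by
          refine lintegral_congr fun v => ?_
          exact lintegral_const_mul _ (hHm.comp (measurable_id.sub measurable_const))
      _ = ∫⁻ v, X v ^ (2:ℝ) * I := by
          refine lintegral_congr fun v => ?_
          rw [lintegral_sub_right_eq_self H v]
      _ = (∫⁻ v, X v ^ (2:ℝ)) * I := lintegral_mul_const _ (hXm.pow_const _)
  have hsnorm2 : ∀ (g : E → ℝ), eLpNorm g 2 volume
      = (∫⁻ u, (‖g u‖₊ : ℝ≥0∞) ^ (2:ℝ)) ^ (1/2 : ℝ) := by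
    intro g
    rw [eLpNorm_eq_lintegral_rpow_enorm_toReal two_ne_zero ENNReal.ofNat_ne_top]
    norm_num
    rfl
  rw [hsnorm2, hsnorm2]
  have hpt : ∀ u, (‖∫ v, x v * h (u - v)‖₊ : ℝ≥0∞) ^ (2:ℝ) ≤ A u * I := by
    intro u
    have h1 : (‖∫ v, x v * h (u - v)‖₊ : ℝ≥0∞) ≤ A u ^ (1/2:ℝ) * I ^ (1/2:ℝ) :=
      (step1 u).trans (CS u)
    calc (‖∫ v, x v * h (u - v)‖₊ : ℝ≥0∞) ^ (2:ℝ)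
        ≤ (A u ^ (1/2:ℝ) * I ^ (1/2:ℝ)) ^ (2:ℝ) :=
          ENNReal.rpow_le_rpow h1 (by norm_num)
      _ = A u * I := by
          rw [ENNReal.mul_rpow_of_nonneg _ _ (by norm_num : (0:ℝ) ≤ 2),
            ← ENNReal.rpow_mul, ← ENNReal.rpow_mul]
          norm_num
  calc (∫⁻ u, (‖∫ v, x v * h (u - v)‖₊ : ℝ≥0∞) ^ (2:ℝ)) ^ (1/2:ℝ)
      ≤ (∫⁻ u, A u * I) ^ (1/2:ℝ) := by
        exact ENNReal.rpow_le_rpow (lintegral_mono hpt) (by norm_num)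
    _ = ((∫⁻ v, X v ^ (2:ℝ)) * I * I) ^ (1/2:ℝ) := by
        rw [lintegral_mul_const _ hAm, hAswap]
    _ = I * (∫⁻ u, (‖x u‖₊ : ℝ≥0∞) ^ (2:ℝ)) ^ (1/2:ℝ) := by
        rw [ENNReal.mul_rpow_of_nonneg _ _ (by norm_num : (0:ℝ) ≤ 1/2),
          ENNReal.mul_rpow_of_nonneg _ _ (by norm_num : (0:ℝ) ≤ 1/2)]
        rw [mul_assoc, ← ENNReal.rpow_add_of_nonneg _ _ (by norm_num) (by norm_num)]
        norm_num
        ring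


lemma seg_bound (φ : E → ℝ) (hφ : ContDiff ℝ 1 φ) (a d : E) :
    |φ (a - d) - φ a| ≤ (∫ t in (0:ℝ)..1, ‖fderiv ℝ φ (a - t • d)‖) * ‖d‖ := by
  have hline : Continuous fun t : ℝ => a - t • d :=
    continuous_const.sub (continuous_id.smul continuous_const)
  have hfc : Continuous fun t : ℝ => fderiv ℝ φ (a - t • d) :=
    (hφ.continuous_fderiv one_ne_zero).comp hline
  have hder : ∀ t : ℝ, HasDerivAt (fun t : ℝ => φ (a - t • d))
      ((fderiv ℝ φ (a - t • d)) (-d)) t := by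
    intro t
    have h1 : HasDerivAt (fun t : ℝ => a - t • d) (-d) t := by
      simpa using ((hasDerivAt_id t).smul_const d).const_sub a
    exact ((hφ.differentiable one_ne_zero).differentiableAt.hasFDerivAt).comp_hasDerivAt t h1
  have hcont : Continuous fun t : ℝ => (fderiv ℝ φ (a - t • d)) (-d) :=
    hfc.clm_apply continuous_const
  have heq : φ (a - d) - φ a = ∫ t in (0:ℝ)..1, (fderiv ℝ φ (a - t • d)) (-d) := by
    have := intervalIntegral.integral_eq_sub_of_hasDerivAt
      (f := fun t : ℝ => φ (a - t • d)) (fun t _ => hder t)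
      (hcont.intervalIntegrable 0 1)
    rw [this]
    norm_num
  rw [← Real.norm_eq_abs, heq]
  calc ‖∫ t in (0:ℝ)..1, (fderiv ℝ φ (a - t • d)) (-d)‖
      ≤ ∫ t in (0:ℝ)..1, ‖(fderiv ℝ φ (a - t • d)) (-d)‖ :=
        intervalIntegral.norm_integral_le_integral_norm zero_le_one
    _ ≤ ∫ t in (0:ℝ)..1, ‖fderiv ℝ φ (a - t • d)‖ * ‖d‖ := by
        refine intervalIntegral.integral_mono_on zero_le_one
          (hcont.norm.intervalIntegrable 0 1)
          ((hfc.norm.mul continuous_const).intervalIntegrable 0 1) ?_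
        intro t _
        simpa using ContinuousLinearMap.le_opNorm (fderiv ℝ φ (a - t • d)) (-d)
    _ = (∫ t in (0:ℝ)..1, ‖fderiv ℝ φ (a - t • d)‖) * ‖d‖ := by
        rw [intervalIntegral.integral_mul_const]

lemma kernel_diff_L1 (φ : E → ℝ) (hφ : ContDiff ℝ 1 φ) (hsupp : HasCompactSupport φ)
    (s : ℝ) (hs : 0 < s) (m : ℝ) (hm : m = s ^ n) (c : E) :
    ∫⁻ w, (‖m * φ (s • (w - c)) - m * φ (s • w)‖₊ : ℝ≥0∞)
      ≤ ENNReal.ofReal (s * ‖c‖ * ∫ u, ‖fderiv ℝ φ u‖) := by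
  set G : E → ℝ := fun w => ‖fderiv ℝ φ w‖ with hG
  have hGc : Continuous G := (hφ.continuous_fderiv one_ne_zero).norm
  have hGcs : HasCompactSupport G := (hsupp.fderiv (𝕜 := ℝ)).norm
  have hGnn : ∀ w, 0 ≤ G w := fun w => norm_nonneg _
  have hfr : Module.finrank ℝ (EuclideanSpace ℝ (Fin n)) = n := finrank_euclideanSpace_fin
  have hsn : (0:ℝ) < s ^ n := pow_pos hs n
  set B : E → ℝ := fun w => ∫ t in (0:ℝ)..1, G (s • w - t • (s • c)) with hB
  have hBnn : ∀ w, 0 ≤ B w := fun w =>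
    intervalIntegral.integral_nonneg zero_le_one fun t _ => hGnn _
  -- pointwise bound
  have hpt : ∀ w, (‖m * φ (s • (w - c)) - m * φ (s • w)‖₊ : ℝ≥0∞)
      ≤ ENNReal.ofReal (s ^ n * ‖s • c‖ * B w) := by
    intro w
    rw [show ((‖m * φ (s • (w - c)) - m * φ (s • w)‖₊ : ℝ≥0∞)) = ENNReal.ofReal ‖m * φ (s • (w - c)) - m * φ (s • w)‖ from (ofReal_norm_eq_enorm _).symm, Real.norm_eq_abs]
    apply ENNReal.ofReal_le_ofReal
    have h1 : |m * φ (s • (w - c)) - m * φ (s • w)|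
        = s ^ n * |φ (s • w - s • c) - φ (s • w)| := by
      rw [smul_sub, ← mul_sub, abs_mul, hm, abs_of_pos hsn]
    rw [h1, mul_assoc]
    refine mul_le_mul_of_nonneg_left ?_ hsn.le
    have := seg_bound φ hφ (s • w) (s • c)
    calc |φ (s • w - s • c) - φ (s • w)|
        ≤ (∫ t in (0:ℝ)..1, ‖fderiv ℝ φ (s • w - t • (s • c))‖) * ‖s • c‖ := this
      _ = ‖s • c‖ * B w := by rw [mul_comm]
  calc ∫⁻ w, (‖m * φ (s • (w - c)) - m * φ (s • w)‖₊ : ℝ≥0∞)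
      ≤ ∫⁻ w, ENNReal.ofReal (s ^ n * ‖s • c‖ * B w) := lintegral_mono hpt
    _ = ∫⁻ w, ENNReal.ofReal (s ^ n * ‖s • c‖) * ENNReal.ofReal (B w) := by
        refine lintegral_congr fun w => ?_
        rw [← ENNReal.ofReal_mul (by positivity)]
    _ = ENNReal.ofReal (s ^ n * ‖s • c‖) * ∫⁻ w, ENNReal.ofReal (B w) :=
        lintegral_const_mul' _ _ ENNReal.ofReal_ne_top
    _ ≤ ENNReal.ofReal (s ^ n * ‖s • c‖) * ENNReal.ofReal ((s ^ n)⁻¹ * ∫ u, G u) := by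
        refine mul_le_mul_right (le_of_eq ?_) _
        -- compute the lintegral of B
        have hBw : ∀ w : E, ENNReal.ofReal (B w)
            = ∫⁻ t in Set.Ioc (0:ℝ) 1, ENNReal.ofReal (G (s • w - t • (s • c))) := by
          intro w
          show ENNReal.ofReal (∫ t in (0:ℝ)..1, G (s • w - t • (s • c))) = _
          rw [intervalIntegral.integral_of_le zero_le_one]
          refine ofReal_integral_eq_lintegral_ofReal ?_ ?_
          · exact (hGc.comp (by fun_prop)).integrableOn_Ioc
          · exact Filter.Eventually.of_forall fun t => hGnn _
        have hswap : ∫⁻ w, ∫⁻ t in Set.Ioc (0:ℝ) 1,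
              ENNReal.ofReal (G (s • w - t • (s • c)))
            = ∫⁻ t in Set.Ioc (0:ℝ) 1, ∫⁻ w, ENNReal.ofReal (G (s • w - t • (s • c))) := by
          refine lintegral_lintegral_swap ?_
          apply Measurable.aemeasurable
          apply ENNReal.measurable_ofReal.comp
          exact (hGc.comp (by fun_prop)).measurable
        have hinner : ∀ t : ℝ, ∫⁻ w, ENNReal.ofReal (G (s • w - t • (s • c)))
            = ENNReal.ofReal ((s ^ n)⁻¹ * ∫ u, G u) := by
          intro t
          set b : E := t • (s • c) with hb
          have hint : Integrable (fun w : E => G (s • w - b)) volume := by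
            refine Continuous.integrable_of_hasCompactSupport (hGc.comp (by fun_prop)) ?_
            refine HasCompactSupport.intro (K := (fun z => s⁻¹ • (z + b)) '' tsupport G)
              (hGcs.image (by fun_prop)) ?_
            intro w hw
            by_contra h0
            apply hw
            refine ⟨s • w - b, subset_tsupport _ h0, ?_⟩
            simp [inv_smul_smul₀ hs.ne']
          rw [← ofReal_integral_eq_lintegral_ofReal hint
            (Filter.Eventually.of_forall fun w => hGnn _)]
          congr 1
          have h2 : ∀ w : E, G (s • w - b) = (fun w => G (s • w)) (w - s⁻¹ • b) := by
            intro w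
            simp [smul_sub, smul_inv_smul₀ hs.ne']
          calc ∫ w, G (s • w - b) = ∫ w, (fun w => G (s • w)) (w - s⁻¹ • b) :=
                integral_congr_ae (Filter.Eventually.of_forall h2)
            _ = ∫ w, G (s • w) := integral_sub_right_eq_self (μ := volume) (fun w => G (s • w)) (s⁻¹ • b)
            _ = (s ^ n)⁻¹ * ∫ u, G u := by
                rw [Measure.integral_comp_smul_of_nonneg (volume : Measure E) G s (hR := hs.le), hfr]
                simp [smul_eq_mul]
        rw [lintegral_congr hBw, hswap, lintegral_congr fun t => hinner t]
        rw [setLIntegral_const, Real.volume_Ioc]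
        norm_num
    _ = ENNReal.ofReal (s * ‖c‖ * ∫ u, G u) := by
        rw [← ENNReal.ofReal_mul (by positivity)]
        congr 1
        rw [norm_smul, Real.norm_eq_abs, abs_of_pos hs]
        field_simp

end Aux


/-- Translation stability of the multiscale averaging `Φ_J x = x ⋆ φ_J`, with
`φ_J(u) = 2^{−nJ} φ(2^{−J} u)`:
`‖(T_c x) ⋆ φ_J − x ⋆ φ_J‖_{L²} ≤ 2^{−J} ‖c‖ ‖∇φ‖_{L¹} ‖x‖_{L²}`. -/
theorem averaging_translation_stability
    {n : ℕ} (J : ℤ) (φ : EuclideanSpace ℝ (Fin n) → ℝ)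
    (hφ : ContDiff ℝ 1 φ) (hsupp : HasCompactSupport φ)
    (x : EuclideanSpace ℝ (Fin n) → ℝ) (hx : MemLp x 2 volume)
    (c : EuclideanSpace ℝ (Fin n)) :
    eLpNorm
      (fun u => (∫ v, x (v - c) * ((2 : ℝ) ^ (-(n : ℤ) * J) * φ ((2 : ℝ) ^ (-J) • (u - v)))) -
        ∫ v, x v * ((2 : ℝ) ^ (-(n : ℤ) * J) * φ ((2 : ℝ) ^ (-J) • (u - v)))) 2 volume ≤
    ENNReal.ofReal ((2 : ℝ) ^ (-J) * ‖c‖ * ∫ u, ‖fderiv ℝ φ u‖) * eLpNorm x 2 volume := by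
  set s : ℝ := (2 : ℝ) ^ (-J) with hsdef
  set m : ℝ := (2 : ℝ) ^ (-(n : ℤ) * J) with hmdef
  have hs : 0 < s := by rw [hsdef]; positivity
  have hm : m = s ^ n := by
    rw [hmdef, hsdef, show (-(n : ℤ) * J) = (-J) * (n : ℤ) by ring, zpow_mul, zpow_natCast]
  have hxm := hx.aestronglyMeasurable
  set x' : EuclideanSpace ℝ (Fin n) → ℝ := hxm.mk x with hx'def
  have hx'sm : StronglyMeasurable x' := hxm.stronglyMeasurable_mk
  have hxx' : x =ᵐ[volume] x' := hxm.ae_eq_mk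
  have hx2' : MemLp x' 2 volume := hx.ae_eq hxx'
  have hKc : Continuous fun w : EuclideanSpace ℝ (Fin n) => m * φ (s • w) :=
    continuous_const.mul (hφ.continuous.comp (continuous_const_smul s))
  have hhc : Continuous fun w : EuclideanSpace ℝ (Fin n) =>
      m * φ (s • (w - c)) - m * φ (s • w) :=
    (hKc.comp (continuous_id.sub continuous_const)).sub hKc
  -- kernels are in L²
  have hker : ∀ b : EuclideanSpace ℝ (Fin n),
      MemLp (fun v => m * φ (s • (b - v))) 2 (volume : Measure (EuclideanSpace ℝ (Fin n))) := by
    intro b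
    have hcont : Continuous fun v : EuclideanSpace ℝ (Fin n) => φ (s • (b - v)) :=
      hφ.continuous.comp (by fun_prop)
    have hcs : HasCompactSupport fun v : EuclideanSpace ℝ (Fin n) => φ (s • (b - v)) := by
      refine HasCompactSupport.intro (K := (fun z => b - s⁻¹ • z) '' tsupport φ)
        (hsupp.image (by fun_prop)) ?_
      intro v hv
      by_contra h0
      apply hv
      refine ⟨s • (b - v), subset_tsupport _ h0, ?_⟩
      simp [inv_smul_smul₀ hs.ne']
    exact (hcont.memLp_of_hasCompactSupport hcs).const_mul m
  have hint : ∀ b : EuclideanSpace ℝ (Fin n),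
      Integrable (fun v => x' v * (m * φ (s • (b - v)))) volume := by
    intro b
    have h1 : MemLp (x' • fun v => m * φ (s • (b - v))) 1 volume :=
      (hker b).smul hx2'
        (hpqr := ⟨by rw [ENNReal.inv_two_add_inv_two, inv_one]⟩)
    have h2 := memLp_one_iff_integrable.mp h1
    exact h2
  -- rewrite the left-hand side function
  have htrans : (fun v : EuclideanSpace ℝ (Fin n) => x (v - c))
      =ᵐ[volume] fun v => x' (v - c) := by
    have hmap : Measure.map (fun v : EuclideanSpace ℝ (Fin n) => v - c)
        (volume : Measure (EuclideanSpace ℝ (Fin n))) = volume := by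
      simp_rw [sub_eq_add_neg]
      exact map_add_right_eq_self volume (-c)
    exact MeasureTheory.ae_eq_comp ((measurable_id.sub measurable_const).aemeasurable)
      (by rw [hmap]; exact hxx')
  have hfun : (fun u => (∫ v, x (v - c) * (m * φ (s • (u - v)))) -
        ∫ v, x v * (m * φ (s • (u - v))))
      = fun u => ∫ v, x' v * (m * φ (s • ((u - v) - c)) - m * φ (s • (u - v))) := by
    funext u
    have e1 : ∫ v, x (v - c) * (m * φ (s • (u - v)))
        = ∫ v, x' (v - c) * (m * φ (s • (u - v))) :=
      integral_congr_ae (htrans.mul (Filter.EventuallyEq.refl _ _))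
    have e2 : ∫ v, x v * (m * φ (s • (u - v)))
        = ∫ v, x' v * (m * φ (s • (u - v))) :=
      integral_congr_ae (hxx'.mul (Filter.EventuallyEq.refl _ _))
    have e3 : ∫ v, x' (v - c) * (m * φ (s • (u - v)))
        = ∫ v, x' v * (m * φ (s • ((u - c) - v))) := by
      have h4 := integral_add_right_eq_self (μ := volume)
        (fun v => x' (v - c) * (m * φ (s • (u - v)))) c
      rw [← h4]
      refine integral_congr_ae (Filter.Eventually.of_forall fun v => ?_)
      have : u - (v + c) = u - c - v := by abel
      simp [this]
    rw [e1, e2, e3, ← integral_sub (hint (u - c)) (hint u)]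
    refine integral_congr_ae (Filter.Eventually.of_forall fun v => ?_)
    simp only [sub_right_comm u c v, mul_sub]
  rw [hfun, eLpNorm_congr_ae hxx']
  refine (young_conv x' hx'sm _ hhc).trans ?_
  exact mul_le_mul_left (kernel_diff_L1 φ hφ hsupp s hs m hm c) _
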